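/- Suppose R ⊂ ℚ satisfies the property ⋆_V (i.e., −S(L) ⊂ R ⊂ V and ∪_{v ∈ V \ R} π(Ψ(v)) = V \ R), and set Γ = V \ R and Λ = ψ(Γ). Then for every Hahn series g with support contained in Λ, there exists a Hahn series f with support contained in Γ such that L(f) = g. -/

import Mathlib

open Polynomial Finset

noncomputable def PL {K : Type*} [Field K] (ℓ n : ℕ) (a : ℕ → Polynomial K) : Finset (ℚ × ℚ) :=
  (Finset.range (n + 1)).biUnion fun i =>
    (a i).support.image fun j : ℕ => ((ℓ : ℚ) ^ i, (j : ℚ))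

noncomputable def PsiSet {K : Type*} [Field K] (ℓ n : ℕ) (a : ℕ → Polynomial K) (v : ℚ) :
    Finset ℚ :=
  (PL ℓ n a).image fun p => v * p.1 + p.2

noncomputable def psi {K : Type*} [Field K] (ℓ n : ℕ) (a : ℕ → Polynomial K) (v : ℚ) : ℚ :=
  ((PsiSet ℓ n a v).min).untopD 0

noncomputable def piF {K : Type*} [Field K] (ℓ n : ℕ) (a : ℕ → Polynomial K) (q : ℚ) : ℚ :=
  (((PL ℓ n a).image fun p => (q - p.2) / p.1).max).unbotD 0

def slopeSet {K : Type*} [Field K] (ℓ n : ℕ) (a : ℕ → Polynomial K) : Set ℚ :=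
  {μ | ∃ b : ℚ,
    (∃ p ∈ PL ℓ n a, ∃ q ∈ PL ℓ n a, p ≠ q ∧ p.2 - μ * p.1 = b ∧ q.2 - μ * q.1 = b) ∧
    ∀ p ∈ PL ℓ n a, b ≤ p.2 - μ * p.1}

noncomputable def scaleEmb (ℓ : ℕ) (hℓ : 2 ≤ ℓ) (i : ℕ) : ℚ ↪o ℚ :=
  (OrderIso.mulLeft₀ ((ℓ : ℚ) ^ i)
    (pow_pos (by exact_mod_cast Nat.lt_of_lt_of_le Nat.zero_lt_two hℓ) i)).toOrderEmbedding

noncomputable def mahlerOp {K : Type*} [Field K] (ℓ : ℕ) (hℓ : 2 ≤ ℓ) (n : ℕ)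
    (a : ℕ → Polynomial K) (f : HahnSeries ℚ K) : HahnSeries ℚ K :=
  ∑ i ∈ Finset.range (n + 1),
    (HahnSeries.ofPowerSeries ℚ K (a i : PowerSeries K)) *
      HahnSeries.embDomain (scaleEmb ℓ hℓ i) f

/-! ### Auxiliary definitions and lemmas -/

noncomputable def coefA {K : Type*} [Field K] (ℓ n : ℕ) (a : ℕ → Polynomial K)
    (p : ℚ × ℚ) : K :=
  ∑ i ∈ Finset.range (n + 1), ∑ j ∈ (a i).support,
    if ((ℓ : ℚ) ^ i, (j : ℚ)) = p then (a i).coeff j else 0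

section Aux

variable {K : Type*} [Field K] (ℓ n : ℕ) (a : ℕ → Polynomial K)

lemma mem_PL_iff {p : ℚ × ℚ} :
    p ∈ PL ℓ n a ↔ ∃ i ∈ Finset.range (n + 1), ∃ j ∈ (a i).support,
      ((ℓ : ℚ) ^ i, (j : ℚ)) = p := by
  simp [PL]

lemma PL_pos (hℓ : 2 ≤ ℓ) : ∀ p ∈ PL ℓ n a, 0 < p.1 := by
  intro p hp
  obtain ⟨i, -, j, -, rfl⟩ := (mem_PL_iff ℓ n a).mp hp
  have : (0:ℚ) < (ℓ:ℚ) := by exact_mod_cast Nat.lt_of_lt_of_le Nat.zero_lt_two hℓ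
  exact pow_pos this i

lemma PL_nonempty (h0 : a 0 ≠ 0) : (PL ℓ n a).Nonempty := by
  obtain ⟨j, hj⟩ := Polynomial.support_nonempty.mpr h0
  exact ⟨((ℓ:ℚ)^0, (j:ℚ)), (mem_PL_iff ℓ n a).mpr
    ⟨0, Finset.mem_range.mpr (Nat.succ_pos n), j, hj, rfl⟩⟩

lemma coefA_ne (hℓ : 2 ≤ ℓ) : ∀ p ∈ PL ℓ n a, coefA ℓ n a p ≠ 0 := by
  intro p hp
  obtain ⟨i, hi, j, hj, rfl⟩ := (mem_PL_iff ℓ n a).mp hp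
  have hl1 : (1:ℚ) < (ℓ:ℚ) := by exact_mod_cast Nat.lt_of_lt_of_le Nat.one_lt_two hℓ
  have hpow : Function.Injective (fun k : ℕ => (ℓ:ℚ) ^ k) := by
    intro x y h
    apply Nat.pow_right_injective hℓ
    have : ((ℓ ^ x : ℕ) : ℚ) = ((ℓ ^ y : ℕ) : ℚ) := by push_cast; exact h
    exact_mod_cast this
  have : coefA ℓ n a ((ℓ:ℚ)^i, (j:ℚ)) = (a i).coeff j := by
    rw [coefA, Finset.sum_eq_single i]
    · rw [Finset.sum_eq_single j]
      · rw [if_pos rfl]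
      · intro j' _ hj'
        rw [if_neg]
        intro h
        exact hj' (Nat.cast_injective (Prod.ext_iff.mp h).2)
      · intro h; exact absurd hj h
    · intro i' _ hi'
      apply Finset.sum_eq_zero
      intro j' _
      rw [if_neg]
      intro h
      exact hi' (hpow (Prod.mk.inj h).1)
    · intro h; exact absurd hi h
  rw [this]
  exact Polynomial.mem_support_iff.mp hj

lemma psi_spec (h0 : a 0 ≠ 0) (v : ℚ) :
    (∃ p ∈ PL ℓ n a, v * p.1 + p.2 = psi ℓ n a v) ∧
      ∀ p ∈ PL ℓ n a, psi ℓ n a v ≤ v * p.1 + p.2 := by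
  have hne : (PsiSet ℓ n a v).Nonempty := Finset.Nonempty.image (PL_nonempty ℓ n a h0) _
  have hmin : psi ℓ n a v = (PsiSet ℓ n a v).min' hne := by
    show ((PsiSet ℓ n a v).min).untopD 0 = _
    rw [← Finset.coe_min' hne]; rfl
  constructor
  · obtain ⟨p, hp, hpe⟩ := Finset.mem_image.mp
      (show (PsiSet ℓ n a v).min' hne ∈ (PL ℓ n a).image (fun p => v * p.1 + p.2) from
        (PsiSet ℓ n a v).min'_mem hne)
    exact ⟨p, hp, by rw [hmin]; exact hpe⟩
  · intro p hp
    rw [hmin]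
    exact Finset.min'_le _ _ (Finset.mem_image_of_mem (fun p : ℚ × ℚ => v * p.1 + p.2) hp)

lemma piF_spec (h0 : a 0 ≠ 0) (q : ℚ) :
    (∃ p ∈ PL ℓ n a, (q - p.2) / p.1 = piF ℓ n a q) ∧
      ∀ p ∈ PL ℓ n a, (q - p.2) / p.1 ≤ piF ℓ n a q := by
  have hne : ((PL ℓ n a).image fun p => (q - p.2) / p.1).Nonempty :=
    Finset.Nonempty.image (PL_nonempty ℓ n a h0) _
  have hmax : piF ℓ n a q = ((PL ℓ n a).image fun p => (q - p.2) / p.1).max' hne := by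
    show (((PL ℓ n a).image fun p => (q - p.2) / p.1).max).unbotD 0 = _
    rw [← Finset.coe_max' hne]; rfl
  constructor
  · have := ((PL ℓ n a).image fun p => (q - p.2) / p.1).max'_mem hne
    rw [Finset.mem_image] at this
    obtain ⟨p, hp, hpe⟩ := this
    exact ⟨p, hp, by rw [hmax, hpe]⟩
  · intro p hp
    rw [hmax]
    exact Finset.le_max' _ _ (Finset.mem_image_of_mem (fun p : ℚ × ℚ => (q - p.2) / p.1) hp)

lemma piF_psi (hℓ : 2 ≤ ℓ) (h0 : a 0 ≠ 0) (v : ℚ) : piF ℓ n a (psi ℓ n a v) = v := by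
  obtain ⟨⟨p0, hp0, hp0e⟩, hle⟩ := psi_spec ℓ n a h0 v
  obtain ⟨⟨p1, hp1, hp1e⟩, hge⟩ := piF_spec ℓ n a h0 (psi ℓ n a v)
  have h1 : piF ℓ n a (psi ℓ n a v) ≤ v := by
    rw [← hp1e]
    rw [div_le_iff₀ (PL_pos ℓ n a hℓ p1 hp1)]
    have := hle p1 hp1
    linarith
  have h2 : v ≤ piF ℓ n a (psi ℓ n a v) := by
    have := hge p0 hp0
    rw [show psi ℓ n a v - p0.2 = v * p0.1 by linarith] at this
    rwa [mul_div_assoc, div_self (ne_of_gt (PL_pos ℓ n a hℓ p0 hp0)), mul_one] at this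
  linarith

lemma psi_piF (hℓ : 2 ≤ ℓ) (h0 : a 0 ≠ 0) (q : ℚ) : psi ℓ n a (piF ℓ n a q) = q := by
  set u := piF ℓ n a q with hu
  obtain ⟨⟨p1, hp1, hp1e⟩, hge⟩ := piF_spec ℓ n a h0 q
  obtain ⟨⟨p0, hp0, hp0e⟩, hle⟩ := psi_spec ℓ n a h0 u
  have hq1 : q = u * p1.1 + p1.2 := by
    have h1 : (q - p1.2) / p1.1 * p1.1 = u * p1.1 := by rw [hp1e]
    rw [div_mul_cancel₀ _ (ne_of_gt (PL_pos ℓ n a hℓ p1 hp1))] at h1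
    linarith
  have h2 : psi ℓ n a u ≤ q := hq1 ▸ hle p1 hp1
  have h3 : q ≤ psi ℓ n a u := by
    rw [← hp0e]
    have := hge p0 hp0
    rw [div_le_iff₀ (PL_pos ℓ n a hℓ p0 hp0)] at this
    linarith
  linarith

lemma ofPS_poly (p : K[X]) :
    (HahnSeries.ofPowerSeries ℚ K (p : PowerSeries K)) =
      ∑ j ∈ p.support, HahnSeries.single (j:ℚ) (p.coeff j) := by
  have h1 : (p : PowerSeries K) =
      (Polynomial.coeToPowerSeries.ringHom (R := K)) p := rfl
  rw [h1]
  conv_lhs => rw [p.as_sum_support]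
  rw [map_sum, map_sum]
  refine Finset.sum_congr rfl fun j hj => ?_
  have h2 : (Polynomial.coeToPowerSeries.ringHom (R := K)) ((monomial j) (p.coeff j))
      = PowerSeries.monomial (R := K) j (p.coeff j) := Polynomial.coe_monomial j _
  have h3 : PowerSeries.monomial (R := K) j (p.coeff j)
      = PowerSeries.C (R := K) (p.coeff j) * PowerSeries.X ^ j := by
    ext k
    simp [PowerSeries.coeff_monomial, PowerSeries.coeff_X_pow, eq_comm]
  rw [h2, h3, map_mul, HahnSeries.ofPowerSeries_C, HahnSeries.ofPowerSeries_X_pow]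
  have h4 : (HahnSeries.C (p.coeff j) : HahnSeries ℚ K) = HahnSeries.single 0 (p.coeff j) := rfl
  rw [h4, HahnSeries.single_mul_single, zero_add, mul_one]

lemma mahler_coeff (hℓ : 2 ≤ ℓ) (f : HahnSeries ℚ K) (q : ℚ) :
    (mahlerOp ℓ hℓ n a f).coeff q
      = ∑ i ∈ Finset.range (n+1), ∑ j ∈ (a i).support,
          (a i).coeff j * f.coeff ((q - j) / (ℓ:ℚ)^i) := by
  have hmap : ∀ {α : Type} (s : Finset α) (F : α → HahnSeries ℚ K),
      (∑ i ∈ s, F i).coeff q = ∑ i ∈ s, (F i).coeff q := fun s F =>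
    map_sum (HahnSeries.coeff.addMonoidHom q) F s
  rw [mahlerOp, hmap]
  refine Finset.sum_congr rfl fun i _ => ?_
  show ((HahnSeries.ofPowerSeries ℚ K (a i : PowerSeries K)) *
      HahnSeries.embDomain (scaleEmb ℓ hℓ i) f).coeff q = _
  rw [ofPS_poly, Finset.sum_mul, hmap]
  refine Finset.sum_congr rfl fun j _ => ?_
  show (HahnSeries.single (j:ℚ) ((a i).coeff j) *
      HahnSeries.embDomain (scaleEmb ℓ hℓ i) f).coeff q = _
  have hl0 : (0:ℚ) < (ℓ:ℚ) := by exact_mod_cast Nat.lt_of_lt_of_le Nat.zero_lt_two hℓ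
  have e : q = (q - (j:ℚ)) + j := by ring
  rw [e, HahnSeries.coeff_single_mul_add]
  have e2 : q - (j:ℚ) = scaleEmb ℓ hℓ i ((q - j)/(ℓ:ℚ)^i) := by
    show _ = (ℓ:ℚ)^i * _
    field_simp
  conv_lhs => rw [e2, HahnSeries.embDomain_coeff]
  ring_nf

lemma mahler_coeff' (hℓ : 2 ≤ ℓ) (f : HahnSeries ℚ K) (q : ℚ) :
    (mahlerOp ℓ hℓ n a f).coeff q
      = ∑ p ∈ PL ℓ n a, coefA ℓ n a p * f.coeff ((q - p.2) / p.1) := by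
  classical
  rw [mahler_coeff ℓ n a hℓ f q]
  have : ∀ p ∈ PL ℓ n a, coefA ℓ n a p * f.coeff ((q - p.2) / p.1)
      = ∑ i ∈ Finset.range (n+1), ∑ j ∈ (a i).support,
          if ((ℓ:ℚ)^i, (j:ℚ)) = p then (a i).coeff j * f.coeff ((q - p.2) / p.1) else 0 := by
    intro p _
    rw [coefA, Finset.sum_mul]
    refine Finset.sum_congr rfl fun i _ => ?_
    rw [Finset.sum_mul]
    exact Finset.sum_congr rfl fun j _ => by rw [ite_mul, zero_mul]
  rw [Finset.sum_congr rfl this, Finset.sum_comm]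
  refine Finset.sum_congr rfl fun i hi => ?_
  rw [Finset.sum_comm]
  refine Finset.sum_congr rfl fun j hj => ?_
  have hmem : ((ℓ:ℚ)^i, (j:ℚ)) ∈ PL ℓ n a := (mem_PL_iff ℓ n a).mpr ⟨i, hi, j, hj, rfl⟩
  have : ∀ p ∈ PL ℓ n a,
      (if ((ℓ:ℚ)^i, (j:ℚ)) = p then (a i).coeff j * f.coeff ((q - p.2) / p.1) else 0)
      = if ((ℓ:ℚ)^i, (j:ℚ)) = p then (a i).coeff j * f.coeff ((q - (j:ℚ)) / (ℓ:ℚ)^i) else 0 := by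
    intro p _
    by_cases h : ((ℓ:ℚ)^i, (j:ℚ)) = p
    · subst h; simp
    · simp [h]
  rw [Finset.sum_congr rfl this, Finset.sum_ite_eq, if_pos hmem]

end Aux

theorem stmt17 {K : Type*} [Field K] (ℓ n : ℕ) (hℓ : 2 ≤ ℓ) (a : ℕ → Polynomial K)
    (h0 : a 0 ≠ 0) (hn : a n ≠ 0) (V : Set ℚ)
    (hsolV : ∀ f : HahnSeries ℚ K, mahlerOp ℓ hℓ n a f = 0 → f.support ⊆ V)
    (hwf : V.IsWF)
    (hslV : Neg.neg '' slopeSet ℓ n a ⊆ V)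
    (hstab : (⋃ v ∈ V, ((PsiSet ℓ n a v).image (piF ℓ n a) : Set ℚ)) = V)
    (R : Set ℚ) (hR1 : Neg.neg '' slopeSet ℓ n a ⊆ R) (hR2 : R ⊆ V)
    (hR3 : (⋃ v ∈ V \ R, ((PsiSet ℓ n a v).image (piF ℓ n a) : Set ℚ)) = V \ R)
    (g : HahnSeries ℚ K) (hg : g.support ⊆ psi ℓ n a '' (V \ R)) :
    ∃ f : HahnSeries ℚ K, f.support ⊆ V \ R ∧ mahlerOp ℓ hℓ n a f = g := by
  classical
  set Γ : Set ℚ := V \ R with hΓ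
  have hΓV : Γ ⊆ V := Set.diff_subset
  have hΓwf : Γ.IsWF := hwf.mono hΓV
  -- the "leading coefficient" at v
  set c : ℚ → K := fun v =>
    ∑ p ∈ (PL ℓ n a).filter (fun p => v * p.1 + p.2 = psi ℓ n a v), coefA ℓ n a p with hc_def
  have hc : ∀ v ∈ Γ, c v ≠ 0 := by
    intro v hv
    obtain ⟨⟨p0, hp0, hp0e⟩, hle⟩ := psi_spec ℓ n a h0 v
    have hp0f : p0 ∈ (PL ℓ n a).filter (fun p => v * p.1 + p.2 = psi ℓ n a v) :=
      Finset.mem_filter.mpr ⟨hp0, hp0e⟩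
    have huniq : ∀ p ∈ (PL ℓ n a).filter (fun p => v * p.1 + p.2 = psi ℓ n a v), p = p0 := by
      intro p hp
      by_contra hne
      rw [Finset.mem_filter] at hp hp0f
      have : -v ∈ slopeSet ℓ n a := by
        refine ⟨psi ℓ n a v, ⟨p, hp.1, p0, hp0f.1, hne, ?_, ?_⟩, ?_⟩
        · rw [show p.2 - (-v) * p.1 = v * p.1 + p.2 by ring]; exact hp.2
        · rw [show p0.2 - (-v) * p0.1 = v * p0.1 + p0.2 by ring]; exact hp0f.2
        · intro q hq
          rw [show q.2 - (-v) * q.1 = v * q.1 + q.2 by ring]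
          exact hle q hq
      have : v ∈ R := hR1 ⟨-v, this, by ring⟩
      exact hv.2 this
    have hsf : (PL ℓ n a).filter (fun p => v * p.1 + p.2 = psi ℓ n a v) = {p0} :=
      Finset.eq_singleton_iff_unique_mem.mpr ⟨hp0f, huniq⟩
    rw [hc_def]
    simp only [hsf, Finset.sum_singleton]
    exact coefA_ne ℓ n a hℓ p0 hp0
  -- well-founded recursion
  set r : ℚ → ℚ → Prop := fun w v => w ∈ Γ ∧ w < v with hr_def
  have hacc : ∀ w ∈ Γ, Acc r w := by
    have h2 := Set.wellFoundedOn_iff.mp hΓwf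
    intro w
    refine h2.induction (C := fun w => w ∈ Γ → Acc r w) w ?_
    intro x IH hx
    exact ⟨x, fun y hy => IH y ⟨hy.2, hy.1, hx⟩ hy.1⟩
  have hr : WellFounded r := ⟨fun v => ⟨v, fun w hw => hacc w hw.1⟩⟩
  set F : ℚ → K := hr.fix (fun v IH =>
    if hv : v ∈ Γ then
      (g.coeff (psi ℓ n a v) - ∑ p ∈ (PL ℓ n a).attach,
        if h : ((psi ℓ n a v - p.1.2) / p.1.1 ∈ Γ ∧ (psi ℓ n a v - p.1.2) / p.1.1 < v)
        then coefA ℓ n a p.1 * IH ((psi ℓ n a v - p.1.2) / p.1.1) h else 0) / c v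
    else 0) with hF_def
  have hF : ∀ v, F v =
      if v ∈ Γ then
        (g.coeff (psi ℓ n a v) - ∑ p ∈ PL ℓ n a,
          if ((psi ℓ n a v - p.2) / p.1 ∈ Γ ∧ (psi ℓ n a v - p.2) / p.1 < v)
          then coefA ℓ n a p * F ((psi ℓ n a v - p.2) / p.1) else 0) / c v
      else 0 := by
    intro v
    rw [hF_def, WellFounded.fix_eq]
    by_cases hv : v ∈ Γ
    · rw [dif_pos hv, if_pos hv]
      congr 2
      rw [← Finset.sum_attach (PL ℓ n a)
        (fun p => if ((psi ℓ n a v - p.2) / p.1 ∈ Γ ∧ (psi ℓ n a v - p.2) / p.1 < v)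
          then coefA ℓ n a p * F ((psi ℓ n a v - p.2) / p.1) else 0)]
      refine Finset.sum_congr rfl fun p _ => ?_
      by_cases h : ((psi ℓ n a v - p.1.2) / p.1.1 ∈ Γ ∧ (psi ℓ n a v - p.1.2) / p.1.1 < v)
      · rw [dif_pos h, if_pos h]
      · rw [dif_neg h, if_neg h]
    · rw [dif_neg hv, if_neg hv]
  have hFzero : ∀ v, v ∉ Γ → F v = 0 := fun v hv => by rw [hF v, if_neg hv]
  have hsupp : Function.support F ⊆ Γ := fun v hv => by
    by_contra h; exact hv (hFzero v h)
  set f : HahnSeries ℚ K :=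
    ⟨F, ((hwf.mono (hsupp.trans hΓV)).isPWO)⟩ with hf_def
  have hfc : ∀ v, f.coeff v = F v := fun v => rfl
  have hfsupp : f.support ⊆ Γ := hsupp
  refine ⟨f, hfsupp, ?_⟩
  ext q
  rw [mahler_coeff' ℓ n a hℓ f q]
  by_cases hq : ∃ v ∈ Γ, psi ℓ n a v = q
  · obtain ⟨v, hv, rfl⟩ := hq
    obtain ⟨-, hle⟩ := psi_spec ℓ n a h0 v
    -- every index w_p is ≤ v
    have hwle : ∀ p ∈ PL ℓ n a, (psi ℓ n a v - p.2) / p.1 ≤ v := by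
      intro p hp
      rw [div_le_iff₀ (PL_pos ℓ n a hℓ p hp)]
      have := hle p hp
      linarith
    rw [← Finset.sum_filter_add_sum_filter_not (PL ℓ n a)
      (fun p => (psi ℓ n a v - p.2) / p.1 ∈ Γ ∧ (psi ℓ n a v - p.2) / p.1 < v)]
    have hS2 : ∑ p ∈ (PL ℓ n a).filter (fun p =>
        ¬((psi ℓ n a v - p.2) / p.1 ∈ Γ ∧ (psi ℓ n a v - p.2) / p.1 < v)),
        coefA ℓ n a p * f.coeff ((psi ℓ n a v - p.2) / p.1) = c v * F v := by
      have step1 : ∀ p ∈ (PL ℓ n a).filter (fun p =>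
          ¬((psi ℓ n a v - p.2) / p.1 ∈ Γ ∧ (psi ℓ n a v - p.2) / p.1 < v)),
          coefA ℓ n a p * f.coeff ((psi ℓ n a v - p.2) / p.1)
          = if v * p.1 + p.2 = psi ℓ n a v then coefA ℓ n a p * F v else 0 := by
        intro p hp
        rw [Finset.mem_filter] at hp
        by_cases he : v * p.1 + p.2 = psi ℓ n a v
        · have hw : (psi ℓ n a v - p.2) / p.1 = v := by
            rw [show psi ℓ n a v - p.2 = v * p.1 by linarith, mul_div_assoc,
              div_self (ne_of_gt (PL_pos ℓ n a hℓ p hp.1)), mul_one]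
          rw [if_pos he, hfc, hw]
        · have hlt : (psi ℓ n a v - p.2) / p.1 < v := by
            rcases lt_or_eq_of_le (hwle p hp.1) with h | h
            · exact h
            · exfalso
              apply he
              have : (psi ℓ n a v - p.2) / p.1 * p.1 = v * p.1 := by rw [h]
              rw [div_mul_cancel₀ _ (ne_of_gt (PL_pos ℓ n a hℓ p hp.1))] at this
              linarith
          have hng : (psi ℓ n a v - p.2) / p.1 ∉ Γ := fun hg' => hp.2 ⟨hg', hlt⟩
          rw [if_neg he, hfc, hFzero _ hng, mul_zero]
      rw [Finset.sum_congr rfl step1, ← Finset.sum_filter]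
      have hset : ((PL ℓ n a).filter (fun p =>
          ¬((psi ℓ n a v - p.2) / p.1 ∈ Γ ∧ (psi ℓ n a v - p.2) / p.1 < v))).filter
          (fun p => v * p.1 + p.2 = psi ℓ n a v)
          = (PL ℓ n a).filter (fun p => v * p.1 + p.2 = psi ℓ n a v) := by
        ext p
        simp only [Finset.mem_filter]
        constructor
        · rintro ⟨⟨h1, -⟩, h3⟩; exact ⟨h1, h3⟩
        · rintro ⟨h1, h3⟩
          refine ⟨⟨h1, ?_⟩, h3⟩
          intro hcon
          have hw : (psi ℓ n a v - p.2) / p.1 = v := by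
            rw [show psi ℓ n a v - p.2 = v * p.1 by linarith, mul_div_assoc,
              div_self (ne_of_gt (PL_pos ℓ n a hℓ p h1)), mul_one]
          rw [hw] at hcon
          exact lt_irrefl v hcon.2
      rw [hset, hc_def, Finset.sum_mul]
    rw [hS2]
    have hFv := hF v
    rw [if_pos hv] at hFv
    have hmc : c v * F v = g.coeff (psi ℓ n a v)
        - ∑ p ∈ PL ℓ n a,
          if ((psi ℓ n a v - p.2) / p.1 ∈ Γ ∧ (psi ℓ n a v - p.2) / p.1 < v)
          then coefA ℓ n a p * F ((psi ℓ n a v - p.2) / p.1) else 0 := by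
      rw [hFv, mul_div_cancel₀ _ (hc v hv)]
    have hS1 : ∑ p ∈ (PL ℓ n a).filter (fun p =>
        (psi ℓ n a v - p.2) / p.1 ∈ Γ ∧ (psi ℓ n a v - p.2) / p.1 < v),
        coefA ℓ n a p * f.coeff ((psi ℓ n a v - p.2) / p.1)
        = ∑ p ∈ PL ℓ n a,
          if ((psi ℓ n a v - p.2) / p.1 ∈ Γ ∧ (psi ℓ n a v - p.2) / p.1 < v)
          then coefA ℓ n a p * F ((psi ℓ n a v - p.2) / p.1) else 0 :=
      Finset.sum_filter _ _
    rw [hS1, hmc]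
    ring
  · -- q is not ψ(v) for v ∈ Γ : both sides vanish
    have hg0 : g.coeff q = 0 := by
      by_contra h
      obtain ⟨v, hvΓ, hve⟩ := hg h
      exact hq ⟨v, hvΓ, hve⟩
    rw [hg0]
    apply Finset.sum_eq_zero
    intro p hp
    by_cases hFw : f.coeff ((q - p.2) / p.1) = 0
    · rw [hFw, mul_zero]
    · exfalso
      have hwΓ : (q - p.2) / p.1 ∈ Γ := hfsupp hFw
      set w := (q - p.2) / p.1 with hw_def
      have hqmem : q ∈ PsiSet ℓ n a w := by
        simp only [PsiSet, Finset.mem_image]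
        refine ⟨p, hp, ?_⟩
        rw [hw_def, div_mul_cancel₀ _ (ne_of_gt (PL_pos ℓ n a hℓ p hp))]
        ring
      have hpiq : piF ℓ n a q ∈ Γ := by
        rw [← hR3]
        exact Set.mem_biUnion hwΓ (by
          rw [Finset.coe_image]
          exact Set.mem_image_of_mem _ (by exact_mod_cast hqmem))
      exact hq ⟨piF ℓ n a q, hpiq, psi_piF ℓ n a hℓ h0 q⟩
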